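/- arXiv:2509.22597 — 3 statements merged into one kernel-verified Lean document; each statement's English description precedes it below -/
import Mathlib

section
/- Let X_1,...,X_N be i.i.d. random points in a probability space with values in a set Λ, let B ⊆ A ⊆ Λ be measurable with P(X_1 ∈ A) = p > 0 and P(X_1 ∈ B) = p̆. Then the expectation of the ratio (number of X_j in B)/(number of X_j in A), with the convention that the ratio is 0 when the denominator is 0, equals (p̆/p)·(1 − (1−p)^N). -/
open MeasureTheory ProbabilityTheory

open Finset

private def c2 : Fin 3 → ℝ := fun v => if v = 2 then 1 else 0
private def cA : Fin 3 → ℝ := fun v => if v = 0 then 0 else 1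

private lemma cA_nonneg (v : Fin 3) : 0 ≤ cA v := by
  unfold cA; split <;> norm_num

private lemma cA_eq_zero {v : Fin 3} (h : cA v = 0) : v = 0 := by
  unfold cA at h
  split at h
  · assumption
  · exact absurd h one_ne_zero

private lemma split_lemma {n : ℕ} (w g : Fin 3 → ℝ) (j : Fin n) :
    ∑ y : Fin n → Fin 3, (∏ i, w (y i)) * (g (y j) / (∑ i, cA (y i)))
    = ∑ v : Fin 3, ∑ ρ : {i : Fin n // i ≠ j} → Fin 3,
        (w v * ∏ i, w (ρ i)) * (g v / (cA v + ∑ i, cA (ρ i))) := by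
  classical
  rw [← Equiv.sum_comp (Equiv.funSplitAt j (Fin 3)).symm
    (fun y => (∏ i, w (y i)) * (g (y j) / (∑ i, cA (y i)))), Fintype.sum_prod_type]
  refine Finset.sum_congr rfl fun v _ => Finset.sum_congr rfl fun ρ _ => ?_
  set y := (Equiv.funSplitAt j (Fin 3)).symm (v, ρ) with hy
  have happ : (Equiv.funSplitAt j (Fin 3)) y = (v, ρ) := Equiv.apply_symm_apply _ _
  have hyj : y j = v := congrArg Prod.fst happ
  have hyne : ∀ i : {i : Fin n // i ≠ j}, y i = ρ i := fun i =>
    congrFun (congrArg Prod.snd happ) i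
  have hprod : ∏ i, w (y i) = w v * ∏ i : {i : Fin n // i ≠ j}, w (ρ i) := by
    rw [← Finset.mul_prod_erase Finset.univ _ (Finset.mem_univ j), hyj]
    congr 1
    rw [Finset.prod_subtype (Finset.univ.erase j)
      (p := fun i => i ≠ j) (by simp) (fun i => w (y i))]
    exact Finset.prod_congr rfl fun i _ => by rw [hyne i]
  have hsum : ∑ i, cA (y i) = cA v + ∑ i : {i : Fin n // i ≠ j}, cA (ρ i) := by
    rw [← Finset.add_sum_erase Finset.univ _ (Finset.mem_univ j), hyj]
    congr 1
    rw [Finset.sum_subtype (Finset.univ.erase j)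
      (p := fun i => i ≠ j) (by simp) (fun i => cA (y i))]
    exact Finset.sum_congr rfl fun i _ => by rw [hyne i]
  rw [hprod, hsum, hyj]

private lemma key (n : ℕ) (w : Fin 3 → ℝ) (hw : w 1 + w 2 ≠ 0) :
    ∑ y : Fin n → Fin 3, (∏ j, w (y j)) * ((∑ j, c2 (y j)) / (∑ j, cA (y j)))
      = w 2 / (w 1 + w 2) * ((w 0 + w 1 + w 2) ^ n - w 0 ^ n) := by
  classical
  set T : Fin n → ℝ := fun j => ∑ ρ : {i : Fin n // i ≠ j} → Fin 3,
    (∏ i, w (ρ i)) * (1 / (1 + ∑ i, cA (ρ i))) with hT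
  have h0 : cA 0 = 0 := by unfold cA; rw [if_pos rfl]
  have h1 : cA 1 = 1 := by unfold cA; rw [if_neg (by decide)]
  have h2 : cA 2 = 1 := by unfold cA; rw [if_neg (by decide)]
  have hc20 : c2 0 = 0 := by unfold c2; rw [if_neg (by decide)]
  have hc21 : c2 1 = 0 := by unfold c2; rw [if_neg (by decide)]
  have hc22 : c2 2 = 1 := by unfold c2; rw [if_pos rfl]
  have hg : ∀ (g : Fin 3 → ℝ), g 0 = 0 → ∀ j : Fin n,
      ∑ y : Fin n → Fin 3, (∏ i, w (y i)) * (g (y j) / (∑ i, cA (y i)))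
        = (w 1 * g 1 + w 2 * g 2) * T j := by
    intro g hg0 j
    rw [split_lemma, Fin.sum_univ_three]
    have e0 : ∑ ρ : {i : Fin n // i ≠ j} → Fin 3,
        (w 0 * ∏ i, w (ρ i)) * (g 0 / (cA 0 + ∑ i, cA (ρ i))) = 0 :=
      Finset.sum_eq_zero fun ρ _ => by rw [hg0, zero_div, mul_zero]
    have e1 : ∑ ρ : {i : Fin n // i ≠ j} → Fin 3,
        (w 1 * ∏ i, w (ρ i)) * (g 1 / (cA 1 + ∑ i, cA (ρ i))) = w 1 * g 1 * T j := by
      rw [hT, Finset.mul_sum]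
      exact Finset.sum_congr rfl fun ρ _ => by rw [h1]; ring
    have e2 : ∑ ρ : {i : Fin n // i ≠ j} → Fin 3,
        (w 2 * ∏ i, w (ρ i)) * (g 2 / (cA 2 + ∑ i, cA (ρ i))) = w 2 * g 2 * T j := by
      rw [hT, Finset.mul_sum]
      exact Finset.sum_congr rfl fun ρ _ => by rw [h2]; ring
    rw [e0, e1, e2]; ring
  -- LHS = w 2 * ∑ j, T j
  have hLHS : ∑ y : Fin n → Fin 3, (∏ j, w (y j)) * ((∑ j, c2 (y j)) / (∑ j, cA (y j)))
      = w 2 * ∑ j, T j := by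
    have de : ∀ y : Fin n → Fin 3,
        (∏ i, w (y i)) * ((∑ j, c2 (y j)) / (∑ i, cA (y i)))
          = ∑ j, (∏ i, w (y i)) * (c2 (y j) / ∑ i, cA (y i)) := fun y => by
      rw [Finset.sum_div, Finset.mul_sum]
    simp_rw [de]
    rw [Finset.sum_comm, Finset.mul_sum]
    refine Finset.sum_congr rfl fun j _ => ?_
    rw [hg c2 hc20 j, hc21, hc22]; ring
  -- the cA version
  have hRHS : ∑ y : Fin n → Fin 3, (∏ j, w (y j)) * ((∑ j, cA (y j)) / (∑ j, cA (y j)))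
      = (w 1 + w 2) * ∑ j, T j := by
    have de : ∀ y : Fin n → Fin 3,
        (∏ i, w (y i)) * ((∑ j, cA (y j)) / (∑ i, cA (y i)))
          = ∑ j, (∏ i, w (y i)) * (cA (y j) / ∑ i, cA (y i)) := fun y => by
      rw [Finset.sum_div, Finset.mul_sum]
    simp_rw [de]
    rw [Finset.sum_comm, Finset.mul_sum]
    refine Finset.sum_congr rfl fun j _ => ?_
    rw [hg cA h0 j, h1, h2]; ring
  -- evaluate the cA version explicitly
  have hval : ∑ y : Fin n → Fin 3, (∏ j, w (y j)) * ((∑ j, cA (y j)) / (∑ j, cA (y j)))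
      = (w 0 + w 1 + w 2) ^ n - w 0 ^ n := by
    have hSS : ∀ y : Fin n → Fin 3,
        (∏ j, w (y j)) * ((∑ j, cA (y j)) / (∑ j, cA (y j)))
          = if y = (fun _ => 0) then 0 else ∏ j, w (y j) := by
      intro y
      by_cases hy : y = fun _ => 0
      · rw [if_pos hy]
        have : ∑ j, cA (y j) = 0 := by
          rw [hy]; simp [h0]
        rw [this, div_zero, mul_zero]
      · have hS : ∑ j, cA (y j) ≠ 0 := by
          intro h
          apply hy
          funext i
          exact cA_eq_zero ((Finset.sum_eq_zero_iff_of_nonneg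
            (fun i _ => cA_nonneg (y i))).1 h i (Finset.mem_univ i))
        rw [if_neg hy, div_self hS, mul_one]
    simp_rw [hSS]
    have hsub : ∑ y : Fin n → Fin 3, (if y = (fun _ => 0) then 0 else ∏ j, w (y j))
        = (∑ y : Fin n → Fin 3, ∏ j, w (y j)) - ∏ _j : Fin n, w 0 := by
      rw [← Finset.add_sum_erase _ (fun y => ∏ j, w (y j)) (Finset.mem_univ (fun _ => 0)),
        ← Finset.add_sum_erase _ _ (Finset.mem_univ (fun _ : Fin n => (0 : Fin 3)))]
      rw [if_pos rfl, zero_add]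
      have : ∑ y ∈ Finset.univ.erase (fun _ : Fin n => (0 : Fin 3)),
          (if y = (fun _ => 0) then (0:ℝ) else ∏ j, w (y j))
          = ∑ y ∈ Finset.univ.erase (fun _ : Fin n => (0 : Fin 3)), ∏ j, w (y j) :=
        Finset.sum_congr rfl fun y hy => if_neg (Finset.ne_of_mem_erase hy)
      rw [this]; ring
    rw [hsub]
    have htot : ∑ y : Fin n → Fin 3, ∏ j, w (y j) = (w 0 + w 1 + w 2) ^ n := by
      have := Finset.prod_univ_sum (fun _ : Fin n => (Finset.univ : Finset (Fin 3)))
        (fun _ v => w v)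
      rw [Fintype.piFinset_univ] at this
      rw [← this]
      simp [Fin.sum_univ_three, Finset.prod_const]
    rw [htot, Finset.prod_const]
    simp
  have hA2 : (w 1 + w 2) * ∑ j, T j = (w 0 + w 1 + w 2) ^ n - w 0 ^ n := by
    rw [← hRHS, hval]
  rw [hLHS]
  rw [div_mul_eq_mul_div, ← hA2]
  field_simp

theorem stmt_0 {Ω Λ : Type*} [MeasurableSpace Ω] [MeasurableSpace Λ]
    (P : Measure Ω) [IsProbabilityMeasure P]
    (N : ℕ) (hN : 0 < N)
    (X : Fin N → Ω → Λ) (hXmeas : ∀ j, Measurable (X j))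
    (hindep : iIndepFun X P)
    (hident : ∀ j, Measure.map (X j) P = Measure.map (X ⟨0, hN⟩) P)
    (A B : Set Λ) (hA : MeasurableSet A) (hB : MeasurableSet B) (hBA : B ⊆ A)
    (p pb : ℝ)
    (hp : ((Measure.map (X ⟨0, hN⟩) P) A).toReal = p)
    (hpb : ((Measure.map (X ⟨0, hN⟩) P) B).toReal = pb)
    (hppos : 0 < p) :
    ∫ ω, (∑ j, Set.indicator B (fun _ => (1 : ℝ)) (X j ω)) /
          (∑ j, Set.indicator A (fun _ => (1 : ℝ)) (X j ω)) ∂P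
      = (pb / p) * (1 - (1 - p) ^ N) := by
  classical
  set μ := Measure.map (X ⟨0, hN⟩) P with hμ
  have hμprob : IsProbabilityMeasure μ := Measure.isProbabilityMeasure_map (hXmeas _).aemeasurable
  set φ : Λ → Fin 3 := fun x => if x ∈ B then 2 else if x ∈ A then 1 else 0 with hφdef
  have hφ : Measurable φ := Measurable.ite hB measurable_const
    (Measurable.ite hA measurable_const measurable_const)
  set ν : Measure (Fin 3) := Measure.map φ μ with hν
  have hνprob : IsProbabilityMeasure ν := Measure.isProbabilityMeasure_map hφ.aemeasurable
  -- pointwise identities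
  have hindB : ∀ x, Set.indicator B (fun _ => (1:ℝ)) x = c2 (φ x) := by
    intro x
    by_cases hxB : x ∈ B
    · simp only [Set.indicator_of_mem hxB, hφdef, if_pos hxB]
      unfold c2; rw [if_pos rfl]
    · rw [Set.indicator_of_notMem hxB]
      by_cases hxA : x ∈ A
      · simp only [hφdef, if_neg hxB, if_pos hxA]
        unfold c2; rw [if_neg (by decide)]
      · simp only [hφdef, if_neg hxB, if_neg hxA]
        unfold c2; rw [if_neg (by decide)]
  have hindA : ∀ x, Set.indicator A (fun _ => (1:ℝ)) x = cA (φ x) := by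
    intro x
    by_cases hxB : x ∈ B
    · rw [Set.indicator_of_mem (hBA hxB)]
      simp only [hφdef, if_pos hxB]
      unfold cA; rw [if_neg (by decide)]
    · by_cases hxA : x ∈ A
      · rw [Set.indicator_of_mem hxA]
        simp only [hφdef, if_neg hxB, if_pos hxA]
        unfold cA; rw [if_neg (by decide)]
      · rw [Set.indicator_of_notMem hxA]
        simp only [hφdef, if_neg hxB, if_neg hxA]
        unfold cA; rw [if_pos rfl]
  -- joint law
  set T : Ω → (Fin N → Fin 3) := fun ω j => φ (X j ω) with hTdef
  have hTmeas : Measurable T := measurable_pi_lambda _ fun j => hφ.comp (hXmeas j)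
  have hmapY : ∀ j, Measure.map (φ ∘ X j) P = ν := by
    intro j
    rw [← Measure.map_map hφ (hXmeas j), hident j]
  have hmapT : Measure.map T P = Measure.pi (fun _ => ν) := by
    symm
    refine Measure.pi_eq fun s hs => ?_
    rw [Measure.map_apply hTmeas (MeasurableSet.univ_pi fun j => hs j)]
    have hpre : T ⁻¹' Set.pi Set.univ s
        = ⋂ j ∈ Finset.univ, (φ ∘ X j) ⁻¹' s j := by
      ext ω
      simp [hTdef, Set.mem_pi, Function.comp]
    rw [hpre, (hindep.comp (fun _ => φ) (fun _ => hφ)).measure_inter_preimage_eq_mul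
      Finset.univ (fun i _ => hs i)]
    refine Finset.prod_congr rfl fun j _ => ?_
    rw [← hmapY j, Measure.map_apply (hφ.comp (hXmeas j)) (hs j)]
  -- values of ν
  have hpre2 : φ ⁻¹' {2} = B := by
    ext x
    simp only [Set.mem_preimage, Set.mem_singleton_iff, hφdef]
    by_cases hxB : x ∈ B
    · simp [hxB]
    · by_cases hxA : x ∈ A
      · rw [if_neg hxB, if_pos hxA]
        exact iff_of_false (by decide) hxB
      · rw [if_neg hxB, if_neg hxA]
        exact iff_of_false (by decide) hxB
  have hpre1 : φ ⁻¹' {1} = A \ B := by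
    ext x
    simp only [Set.mem_preimage, Set.mem_singleton_iff, Set.mem_diff, hφdef]
    by_cases hxB : x ∈ B
    · rw [if_pos hxB]
      exact iff_of_false (by decide) (fun h => h.2 hxB)
    · by_cases hxA : x ∈ A
      · rw [if_neg hxB, if_pos hxA]
        exact iff_of_true rfl ⟨hxA, hxB⟩
      · rw [if_neg hxB, if_neg hxA]
        exact iff_of_false (by decide) (fun h => hxA h.1)
  have hpre0 : φ ⁻¹' {0} = Aᶜ := by
    ext x
    simp only [Set.mem_preimage, Set.mem_singleton_iff, Set.mem_compl_iff, hφdef]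
    by_cases hxB : x ∈ B
    · rw [if_pos hxB]
      exact iff_of_false (by decide) (fun h => h (hBA hxB))
    · by_cases hxA : x ∈ A
      · rw [if_neg hxB, if_pos hxA]
        exact iff_of_false (by decide) (fun h => h hxA)
      · rw [if_neg hxB, if_neg hxA]
        exact iff_of_true rfl hxA
  have hw2 : (ν {2}).toReal = pb := by
    rw [hν, Measure.map_apply hφ (measurableSet_singleton _), hpre2, hpb]
  have hw1 : (ν {1}).toReal = p - pb := by
    rw [hν, Measure.map_apply hφ (measurableSet_singleton _), hpre1,
      measure_diff hBA hB.nullMeasurableSet (measure_ne_top μ B),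
      ENNReal.toReal_sub_of_le (measure_mono hBA) (measure_ne_top μ A), hp, hpb]
  have hw0 : (ν {0}).toReal = 1 - p := by
    rw [hν, Measure.map_apply hφ (measurableSet_singleton _), hpre0,
      measure_compl hA (measure_ne_top μ A), measure_univ,
      ENNReal.toReal_sub_of_le prob_le_one ENNReal.one_ne_top, ENNReal.toReal_one, hp]
  have hwne : (ν {1}).toReal + (ν {2}).toReal ≠ 0 := by
    rw [hw1, hw2, show p - pb + pb = p from by ring]
    exact ne_of_gt hppos
  -- rewrite the integrand
  set f : (Fin N → Fin 3) → ℝ := fun y => (∑ j, c2 (y j)) / (∑ j, cA (y j)) with hfdef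
  have hf : ∀ ω, (∑ j, Set.indicator B (fun _ => (1:ℝ)) (X j ω)) /
      (∑ j, Set.indicator A (fun _ => (1:ℝ)) (X j ω)) = f (T ω) := by
    intro ω
    rw [hfdef]
    congr 1
    · exact Finset.sum_congr rfl fun j _ => hindB (X j ω)
    · exact Finset.sum_congr rfl fun j _ => hindA (X j ω)
  calc ∫ ω, (∑ j, Set.indicator B (fun _ => (1 : ℝ)) (X j ω)) /
          (∑ j, Set.indicator A (fun _ => (1 : ℝ)) (X j ω)) ∂P
      = ∫ ω, f (T ω) ∂P := by
        exact integral_congr_ae (Filter.Eventually.of_forall hf)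
    _ = ∫ y, f y ∂(Measure.map T P) :=
        (integral_map hTmeas.aemeasurable
          ((measurable_of_countable f).aestronglyMeasurable)).symm
    _ = ∫ y, f y ∂(Measure.pi (fun _ => ν)) := by rw [hmapT]
    _ = ∑ y : Fin N → Fin 3, ((Measure.pi (fun _ => ν)) {y}).toReal • f y :=
        integral_fintype (.of_finite)
    _ = ∑ y : Fin N → Fin 3, (∏ j, (ν {y j}).toReal) * f y := by
        refine Finset.sum_congr rfl fun y _ => ?_
        rw [← Set.univ_pi_singleton, Measure.pi_pi, ENNReal.toReal_prod, smul_eq_mul]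
    _ = (ν {2}).toReal / ((ν {1}).toReal + (ν {2}).toReal)
          * (((ν {0}).toReal + (ν {1}).toReal + (ν {2}).toReal) ^ N
              - ((ν {0}).toReal) ^ N) := key N (fun v => (ν {v}).toReal) hwne
    _ = (pb / p) * (1 - (1 - p) ^ N) := by
        rw [hw0, hw1, hw2, show p - pb + pb = p from by ring,
          show (1:ℝ) - p + (p - pb) + pb = 1 from by ring, one_pow]
end

section
/- For any integer N ≥ 2 and real p with 0 < p ≤ 1, ∑_{j=2}^N (1/(j(j−1))) · C(N−2, j−2) · p^{j−2} (1−p)^{N−j} = (1/(N(N−1)p²)) · (1 − (1−p)^{N−1}(1 + (N−1)p)). -/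
lemma choose_aux (n k : ℕ) :
    (n + 2).choose (k + 2) * ((k + 2) * (k + 1)) = (n + 2) * (n + 1) * n.choose k := by
  have h1 := Nat.add_one_mul_choose_eq (n + 1) (k + 1)
  have h2 := Nat.add_one_mul_choose_eq n k
  calc (n + 2).choose (k + 2) * ((k + 2) * (k + 1))
      = ((n + 2).choose (k + 2) * (k + 2)) * (k + 1) := by ring
    _ = ((n + 2) * (n + 1).choose (k + 1)) * (k + 1) := by rw [← h1]
    _ = (n + 2) * ((n + 1).choose (k + 1) * (k + 1)) := by ring
    _ = (n + 2) * ((n + 1) * n.choose k) := by rw [← h2]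
    _ = (n + 2) * (n + 1) * n.choose k := by ring

theorem stmt_3 (N : ℕ) (hN : 2 ≤ N) (p : ℝ) (hp0 : 0 < p) (hp1 : p ≤ 1) :
    ∑ j ∈ Finset.Icc 2 N,
      (1 / ((j : ℝ) * ((j : ℝ) - 1))) * (Nat.choose (N - 2) (j - 2)) * p ^ (j - 2) * (1 - p) ^ (N - j)
      = (1 / ((N : ℝ) * ((N : ℝ) - 1) * p ^ 2)) *
        (1 - (1 - p) ^ (N - 1) * (1 + ((N : ℝ) - 1) * p)) := by
  obtain ⟨m, rfl⟩ : ∃ m, N = m + 2 := ⟨N - 2, by omega⟩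
  have hp : p ≠ 0 := ne_of_gt hp0
  set g : ℕ → ℝ := fun k => p ^ k * (1 - p) ^ (m + 2 - k) * ((m+2).choose k : ℝ) with hg
  -- binomial theorem
  have hb : (1 : ℝ) = ∑ k ∈ Finset.range (m + 3), g k := by
    have := add_pow p (1 - p) (m + 2)
    simp only [add_sub_cancel, one_pow] at this
    rw [← this]
  have hsplit : ∑ k ∈ Finset.range (m + 3), g k
      = ∑ i ∈ Finset.range (m + 1), g (i + 2) + g 1 + g 0 := by
    rw [Finset.sum_range_succ', Finset.sum_range_succ']
  have hg0 : g 0 = (1 - p) ^ (m + 2) := by simp [hg]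
  have hg1 : g 1 = ((m:ℝ) + 2) * p * (1 - p) ^ (m + 1) := by
    simp only [hg]
    rw [Nat.choose_one_right]
    have : m + 2 - 1 = m + 1 := by omega
    rw [this]
    push_cast
    ring
  have key : ∑ i ∈ Finset.range (m + 1), p ^ (i + 2) * (1 - p) ^ (m - i) * ((m+2).choose (i+2) : ℝ)
      = 1 - ((1 - p) ^ (m + 2) + ((m:ℝ) + 2) * p * (1 - p) ^ (m + 1)) := by
    have heq : ∑ i ∈ Finset.range (m + 1), p ^ (i + 2) * (1 - p) ^ (m - i) * ((m+2).choose (i+2) : ℝ)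
        = ∑ i ∈ Finset.range (m + 1), g (i + 2) := by
      apply Finset.sum_congr rfl
      intro i _
      simp only [hg]
      have : m + 2 - (i + 2) = m - i := by omega
      rw [this]
    rw [heq]
    have := hb
    rw [hsplit, hg0, hg1] at this
    linarith
  -- reindex LHS
  rw [show Finset.Icc 2 (m + 2) = Finset.Ico 2 (m + 3) from (Finset.Ico_add_one_right_eq_Icc 2 (m+2)).symm,
    Finset.sum_Ico_eq_sum_range]
  have hlen : m + 3 - 2 = m + 1 := by omega
  rw [hlen]
  have step : ∀ i ∈ Finset.range (m + 1),
      (1 / (((2 + i : ℕ) : ℝ) * (((2 + i : ℕ) : ℝ) - 1))) * ((m + 2 - 2).choose (2 + i - 2) : ℝ)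
        * p ^ (2 + i - 2) * (1 - p) ^ (m + 2 - (2 + i))
      = (1 / (((m:ℝ) + 2) * ((m:ℝ) + 1) * p ^ 2)) *
        (p ^ (i + 2) * (1 - p) ^ (m - i) * ((m+2).choose (i+2) : ℝ)) := by
    intro i _
    have e1 : m + 2 - 2 = m := by omega
    have e2 : 2 + i - 2 = i := by omega
    have e3 : m + 2 - (2 + i) = m - i := by omega
    rw [e1, e2, e3]
    have hc : (((m+2).choose (i+2) : ℝ)) * (((i:ℝ) + 2) * ((i:ℝ) + 1)) = ((m:ℝ) + 2) * ((m:ℝ) + 1) * (m.choose i : ℝ) := by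
      exact_mod_cast congrArg (Nat.cast : ℕ → ℝ) (choose_aux m i)
    have hi1 : ((2 + i : ℕ) : ℝ) = (i:ℝ) + 2 := by push_cast; ring
    rw [hi1]
    have hpe : p ^ (i + 2) = p ^ i * p ^ 2 := by ring
    rw [hpe, show ((i:ℝ)+2) - 1 = (i:ℝ)+1 from by ring]
    have hA : (((i:ℝ) + 2) * ((i:ℝ)+1)) ≠ 0 := by positivity
    have hB : (((m:ℝ) + 2) * ((m:ℝ) + 1) * p ^ 2) ≠ 0 := by positivity
    rw [one_div_mul_eq_div, div_mul_eq_mul_div, div_mul_eq_mul_div, one_div_mul_eq_div,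
      div_eq_div_iff hA hB]
    linear_combination (-(p ^ i * p ^ 2 * (1 - p) ^ (m - i))) * hc
  rw [Finset.sum_congr rfl step, ← Finset.mul_sum, key]
  have e4 : m + 2 - 1 = m + 1 := by omega
  rw [e4]
  push_cast
  have hpow : (1 - p) ^ (m + 2) = (1 - p) ^ (m + 1) * (1 - p) := by ring
  rw [hpow]
  ring
end

section
/- Expectation of the empirical eSIP estimator: let I_1,...,I_M be a finite measurable partition of 𝒟, let λ_1,...,λ_N be i.i.d. with law P_p on Λ and q_1,...,q_K i.i.d. with law P_𝒟 on 𝒟, independent of the λ's. Define P̂(A) = ∑_{i=1}^M [(∑_j 1_{A∩Q^{-1}(I_i)}(λ_j))/(∑_j 1_{Q^{-1}(I_i)}(λ_j))] · (1/K)∑_k 1_{I_i}(q_k) with the convention 0/0 = 0. Then E(P̂(A)) = ∑_{i=1}^M (p̆_i/p_i)(1 − (1−p_i)^N) P_𝒟(I_i), where p_i = P_p(Q^{-1}(I_i)) and p̆_i = P_p(A ∩ Q^{-1}(I_i)), assuming p_i > 0 for all i. -/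
open MeasureTheory ProbabilityTheory Finset

section AuxESIP

variable {Λ : Type*} [MeasurableSpace Λ]

lemma aux_integrable_comp_nat {α : Type*} [MeasurableSpace α] (ν : Measure α) [IsFiniteMeasure ν]
    (h : α → ℕ) (hh : Measurable h) (n : ℕ) (hb : ∀ a, h a ≤ n) (g : ℕ → ℝ) :
    Integrable (fun a => g (h a)) ν := by
  refine Integrable.mono' (integrable_const (∑ t ∈ Finset.range (n + 1), ‖g t‖))
    ((measurable_from_top.comp hh).aestronglyMeasurable) ?_
  exact Filter.Eventually.of_forall fun a => Finset.single_le_sum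
    (fun t _ => norm_nonneg (g t)) (Finset.mem_range.2 (Nat.lt_succ_of_le (hb a)))

lemma aux_measurable_count (B : Set Λ) (hB : MeasurableSet B) (n : ℕ) :
    Measurable (fun z : Fin n → Λ => ∑ j, B.indicator (fun _ => (1 : ℕ)) (z j)) :=
  Finset.measurable_sum _ fun j _ => (measurable_const.indicator hB).comp (measurable_pi_apply j)

lemma aux_count_le (B : Set Λ) (n : ℕ) (z : Fin n → Λ) :
    (∑ j, B.indicator (fun _ => (1 : ℕ)) (z j)) ≤ n := by
  calc (∑ j, B.indicator (fun _ => (1 : ℕ)) (z j)) ≤ ∑ _j : Fin n, 1 :=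
        Finset.sum_le_sum fun j _ => Set.indicator_le_self' (fun _ _ => Nat.zero_le _) (z j)
  _ = n := by simp

lemma aux_pascal_sum (p : ℝ) (n : ℕ) (g : ℕ → ℝ) :
    p * (∑ s ∈ range (n + 1), (n.choose s : ℝ) * p ^ s * (1 - p) ^ (n - s) * g (1 + s))
      + (1 - p) * (∑ s ∈ range (n + 1), (n.choose s : ℝ) * p ^ s * (1 - p) ^ (n - s) * g s)
    = ∑ s ∈ range (n + 1 + 1), ((n + 1).choose s : ℝ) * p ^ s * (1 - p) ^ (n + 1 - s) * g s := by
  set q := 1 - p with hq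
  rw [Finset.sum_range_succ' (fun s => ((n + 1).choose s : ℝ) * p ^ s * q ^ (n + 1 - s) * g s)]
  rw [Finset.mul_sum, Finset.mul_sum]
  rw [Finset.sum_range_succ' (fun s => q * ((n.choose s : ℝ) * p ^ s * q ^ (n - s) * g s))]
  -- extend the inner range-n sum to range (n+1) since choose n (n+1) = 0
  have hext : (∑ s ∈ range n, q * ((n.choose (s + 1) : ℝ) * p ^ (s + 1) * q ^ (n - (s + 1)) * g (s + 1)))
      = ∑ s ∈ range (n + 1), q * ((n.choose (s + 1) : ℝ) * p ^ (s + 1) * q ^ (n - (s + 1)) * g (s + 1)) := by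
    rw [Finset.sum_range_succ]
    simp
  rw [hext]
  have hmain : ∀ s ∈ range (n + 1),
      p * ((n.choose s : ℝ) * p ^ s * q ^ (n - s) * g (1 + s))
        + q * ((n.choose (s + 1) : ℝ) * p ^ (s + 1) * q ^ (n - (s + 1)) * g (s + 1))
      = ((n + 1).choose (s + 1) : ℝ) * p ^ (s + 1) * q ^ (n + 1 - (s + 1)) * g (s + 1) := by
    intro s hs
    have hs' : s ≤ n := Nat.lt_succ_iff.mp (Finset.mem_range.mp hs)
    have hcast : ((n + 1).choose (s + 1) : ℝ) = (n.choose s : ℝ) + (n.choose (s + 1) : ℝ) := by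
      rw [Nat.choose_succ_succ]; push_cast; ring
    have hg : (1 + s) = s + 1 := by omega
    rcases eq_or_lt_of_le hs' with h | h
    · subst h
      simp [Nat.choose_succ_self, hg]
      ring
    · have h1 : n - s = (n - (s + 1)) + 1 := by omega
      have h2 : n + 1 - (s + 1) = (n - (s + 1)) + 1 := by omega
      rw [hg, hcast, h1, h2]
      ring
  rw [← Finset.sum_congr rfl hmain, Finset.sum_add_distrib]
  simp
  ring

lemma aux_binom_inv (p : ℝ) (hp : p ≠ 0) (n : ℕ) :
    ∑ s ∈ range (n + 1), (n.choose s : ℝ) * p ^ s * (1 - p) ^ (n - s) * (1 + (s : ℝ))⁻¹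
      = (1 - (1 - p) ^ (n + 1)) / ((n + 1) * p) := by
  set q := 1 - p with hq
  have key : ∑ s ∈ range (n + 1), ((n + 1).choose (s + 1) : ℝ) * p ^ (s + 1) * q ^ (n - s)
      = 1 - q ^ (n + 1) := by
    have h := add_pow p q (n + 1)
    have hpq : p + q = 1 := by rw [hq]; ring
    rw [hpq, one_pow] at h
    rw [Finset.sum_range_succ' (fun k => p ^ k * q ^ (n + 1 - k) * ((n + 1).choose k : ℝ))] at h
    simp only [pow_zero, Nat.choose_zero_right, Nat.cast_one, one_mul, mul_one, Nat.sub_zero] at h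
    have : ∀ s ∈ range (n + 1),
        p ^ (s + 1) * q ^ (n + 1 - (s + 1)) * ((n + 1).choose (s + 1) : ℝ)
          = ((n + 1).choose (s + 1) : ℝ) * p ^ (s + 1) * q ^ (n - s) := by
      intro s hs
      have : n + 1 - (s + 1) = n - s := by omega
      rw [this]; ring
    rw [Finset.sum_congr rfl this] at h
    linarith
  have hterm : ∀ s ∈ range (n + 1),
      (n.choose s : ℝ) * p ^ s * q ^ (n - s) * (1 + (s : ℝ))⁻¹
        = ((n + 1).choose (s + 1) : ℝ) * p ^ (s + 1) * q ^ (n - s) / ((n + 1) * p) := by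
    intro s _
    have hc : ((n : ℝ) + 1) * (n.choose s : ℝ) = ((n + 1).choose (s + 1) : ℝ) * ((s : ℝ) + 1) := by
      exact_mod_cast congrArg (Nat.cast (R := ℝ)) (Nat.add_one_mul_choose_eq n s)
    have h1 : (1 + (s : ℝ)) ≠ 0 := by positivity
    have h2 : ((n : ℝ) + 1) ≠ 0 := by positivity
    field_simp
    linear_combination (p ^ (s + 1) * q ^ (n - s)) * hc
  rw [Finset.sum_congr rfl hterm, ← Finset.sum_div, key]

lemma aux_binom_integral (μ : Measure Λ) [IsProbabilityMeasure μ] (B : Set Λ)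
    (hB : MeasurableSet B) :
    ∀ (n : ℕ) (g : ℕ → ℝ),
    ∫ z : Fin n → Λ, g (∑ j, B.indicator (fun _ => (1 : ℕ)) (z j)) ∂(Measure.pi fun _ => μ)
      = ∑ s ∈ Finset.range (n + 1),
          (n.choose s : ℝ) * (μ B).toReal ^ s * (1 - (μ B).toReal) ^ (n - s) * g s := by
  intro n
  induction n with
  | zero => intro g; simp
  | succ n ih =>
    intro g
    set p := (μ B).toReal with hpdef
    have hq : (μ Bᶜ).toReal = 1 - p := by
      rw [measure_compl hB (measure_ne_top μ B), measure_univ,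
        ENNReal.toReal_sub_of_le prob_le_one ENNReal.one_ne_top]
      simp
      exact hpdef.symm
    set e := MeasurableEquiv.piFinSuccAbove (fun _ : Fin (n + 1) => Λ) 0 with he
    have MP := measurePreserving_piFinSuccAbove (fun _ : Fin (n + 1) => μ) 0
    set F := fun z : Fin (n + 1) → Λ => g (∑ j, B.indicator (fun _ => (1 : ℕ)) (z j)) with hF
    have h1 : ∫ z, F z ∂(Measure.pi fun _ => μ)
        = ∫ yz, F (e.symm yz) ∂(μ.prod (Measure.pi fun _ : Fin n => μ)) := by
      have := MP.integral_comp e.measurableEmbedding (F ∘ e.symm)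
      simp only [Function.comp] at this
      rw [← this]
      congr 1
      funext x
      rw [e.symm_apply_apply]
    have h2 : ∀ yz : Λ × (Fin n → Λ), F (e.symm yz) =
        B.indicator (fun _ => (1 : ℝ)) yz.1 * g (1 + ∑ j, B.indicator (fun _ => (1 : ℕ)) (yz.2 j))
          + Bᶜ.indicator (fun _ => (1 : ℝ)) yz.1 * g (∑ j, B.indicator (fun _ => (1 : ℕ)) (yz.2 j)) := by
      rintro ⟨y, z⟩
      have hsum : F (e.symm (y, z)) =
          g (B.indicator (fun _ => (1 : ℕ)) y + ∑ j, B.indicator (fun _ => (1 : ℕ)) (z j)) := by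
        simp only [hF, he, MeasurableEquiv.piFinSuccAbove_symm_apply]
        congr 1
        rw [Fin.sum_univ_succAbove _ 0]
        simp [Fin.insertNth_apply_same, Fin.insertNth_apply_succAbove]
      by_cases hy : y ∈ B <;> simp [hsum, hy]
    have hint1 : Integrable (fun yz : Λ × (Fin n → Λ) => B.indicator (fun _ => (1 : ℝ)) yz.1
        * g (1 + ∑ j, B.indicator (fun _ => (1 : ℕ)) (yz.2 j)))
        (μ.prod (Measure.pi fun _ : Fin n => μ)) :=
      ((integrable_const (1:ℝ)).indicator hB).mul_prod
        (aux_integrable_comp_nat _ _ (aux_measurable_count B hB n) n (aux_count_le B n)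
          (fun t => g (1 + t)))
    have hint2 : Integrable (fun yz : Λ × (Fin n → Λ) => Bᶜ.indicator (fun _ => (1 : ℝ)) yz.1
        * g (∑ j, B.indicator (fun _ => (1 : ℕ)) (yz.2 j)))
        (μ.prod (Measure.pi fun _ : Fin n => μ)) :=
      ((integrable_const (1:ℝ)).indicator hB.compl).mul_prod
        (aux_integrable_comp_nat _ _ (aux_measurable_count B hB n) n (aux_count_le B n) g)
    rw [h1, integral_congr_ae (Filter.Eventually.of_forall h2), integral_add hint1 hint2,
      integral_prod_mul (f := fun y => B.indicator (fun _ => (1 : ℝ)) y)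
        (g := fun z : Fin n → Λ => g (1 + ∑ j, B.indicator (fun _ => (1 : ℕ)) (z j))),
      integral_prod_mul (f := fun y => Bᶜ.indicator (fun _ => (1 : ℝ)) y)
        (g := fun z : Fin n → Λ => g (∑ j, B.indicator (fun _ => (1 : ℕ)) (z j)))]
    rw [integral_indicator_const (1 : ℝ) hB, integral_indicator_const (1 : ℝ) hB.compl,
      ih (fun t => g (1 + t)), ih g, measureReal_def, measureReal_def, hq]
    simp only [smul_eq_mul, mul_one]
    exact aux_pascal_sum p n g

lemma aux_abs_div_le_one (T S : ℝ) (h0 : 0 ≤ T) (h1 : T ≤ S) : |T / S| ≤ 1 := by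
  rcases eq_or_lt_of_le (h0.trans h1) with h | h
  · have : T = 0 := le_antisymm (h1.trans_eq h.symm) h0
    simp [this, ← h]
  · rw [abs_of_nonneg (div_nonneg h0 h.le)]
    exact div_le_one_of_le₀ h1 h.le

lemma aux_ratio_integral (μ : Measure Λ) [IsProbabilityMeasure μ] (A' B : Set Λ)
    (hA' : MeasurableSet A') (hB : MeasurableSet B) (hsub : A' ⊆ B)
    (hp : (μ B).toReal ≠ 0) (n : ℕ) :
    ∫ x : Fin (n + 1) → Λ,
        (∑ j, A'.indicator (fun _ => (1 : ℝ)) (x j)) / (∑ j, B.indicator (fun _ => (1 : ℝ)) (x j))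
        ∂(Measure.pi fun _ => μ)
      = ((μ A').toReal / (μ B).toReal) * (1 - (1 - (μ B).toReal) ^ (n + 1)) := by
  set p := (μ B).toReal with hpdef
  set ν := (Measure.pi fun _ : Fin (n + 1) => μ) with hν
  have hcast : ∀ (m : ℕ) (z : Fin m → Λ), (∑ k, B.indicator (fun _ => (1 : ℝ)) (z k))
      = ((∑ k, B.indicator (fun _ => (1 : ℕ)) (z k) : ℕ) : ℝ) := by
    intro m z
    push_cast
    exact Finset.sum_congr rfl fun k _ => by by_cases h : z k ∈ B <;> simp [h]
  -- measurability of denominators and numerators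
  have hmden : ∀ (m : ℕ), Measurable (fun x : Fin m → Λ =>
      ∑ j, B.indicator (fun _ => (1 : ℝ)) (x j)) := fun m =>
    Finset.measurable_sum _ fun j _ => (measurable_const.indicator hB).comp (measurable_pi_apply j)
  -- step 1: sum_div
  have hsd : ∀ x : Fin (n + 1) → Λ,
      (∑ j, A'.indicator (fun _ => (1 : ℝ)) (x j)) / (∑ j, B.indicator (fun _ => (1 : ℝ)) (x j))
        = ∑ j, A'.indicator (fun _ => (1 : ℝ)) (x j) / (∑ j', B.indicator (fun _ => (1 : ℝ)) (x j')) :=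
    fun x => Finset.sum_div _ _ _
  rw [integral_congr_ae (Filter.Eventually.of_forall hsd)]
  -- integrability of each summand
  have hintg : ∀ j : Fin (n + 1), Integrable (fun x : Fin (n + 1) → Λ =>
      A'.indicator (fun _ => (1 : ℝ)) (x j) / (∑ j', B.indicator (fun _ => (1 : ℝ)) (x j'))) ν := by
    intro j
    refine Integrable.mono' (integrable_const 1)
      ((((measurable_const.indicator hA').comp (measurable_pi_apply j)).div
        (hmden (n + 1))).aestronglyMeasurable) (Filter.Eventually.of_forall fun x => ?_)
    refine aux_abs_div_le_one _ _ (Set.indicator_nonneg (fun _ _ => zero_le_one) _) ?_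
    by_cases hx : x j ∈ A'
    · calc A'.indicator (fun _ => (1:ℝ)) (x j) = B.indicator (fun _ => (1:ℝ)) (x j) := by
            simp [hx, hsub hx]
        _ ≤ ∑ j', B.indicator (fun _ => (1 : ℝ)) (x j') :=
            Finset.single_le_sum (f := fun j' => B.indicator (fun _ => (1:ℝ)) (x j'))
              (fun j' _ => Set.indicator_nonneg (fun _ _ => zero_le_one) _) (Finset.mem_univ j)
    · simp only [Set.indicator_of_notMem hx]
      exact Finset.sum_nonneg fun j' _ => Set.indicator_nonneg (fun _ _ => zero_le_one) _
  rw [integral_finset_sum _ fun j _ => hintg j]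
  -- per-coordinate computation
  have hj : ∀ j : Fin (n + 1), ∫ x, A'.indicator (fun _ => (1 : ℝ)) (x j)
      / (∑ j', B.indicator (fun _ => (1 : ℝ)) (x j')) ∂ν
      = (μ A').toReal * ((1 - (1 - p) ^ (n + 1)) / ((n + 1) * p)) := by
    intro j
    set e := MeasurableEquiv.piFinSuccAbove (fun _ : Fin (n + 1) => Λ) j with he
    have MP := measurePreserving_piFinSuccAbove (fun _ : Fin (n + 1) => μ) j
    set F := fun x : Fin (n + 1) → Λ => A'.indicator (fun _ => (1 : ℝ)) (x j)
      / (∑ j', B.indicator (fun _ => (1 : ℝ)) (x j')) with hF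
    have h1 : ∫ x, F x ∂ν = ∫ yz, F (e.symm yz) ∂(μ.prod (Measure.pi fun _ : Fin n => μ)) := by
      have := MP.integral_comp e.measurableEmbedding (F ∘ e.symm)
      simp only [Function.comp] at this
      rw [← this]
      congr 1
      funext x
      rw [e.symm_apply_apply]
    have h2 : ∀ yz : Λ × (Fin n → Λ), F (e.symm yz) =
        A'.indicator (fun _ => (1 : ℝ)) yz.1
          * (1 + ((∑ k, B.indicator (fun _ => (1 : ℕ)) (yz.2 k) : ℕ) : ℝ))⁻¹ := by
      rintro ⟨y, z⟩
      have hy1 : F (e.symm (y, z)) = A'.indicator (fun _ => (1 : ℝ)) y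
          / (B.indicator (fun _ => (1 : ℝ)) y + ∑ k, B.indicator (fun _ => (1 : ℝ)) (z k)) := by
        simp only [hF, he, MeasurableEquiv.piFinSuccAbove_symm_apply]
        congr 1
        · simp
        · rw [Fin.sum_univ_succAbove _ j]
          simp [Fin.insertNth_apply_same, Fin.insertNth_apply_succAbove]
      rw [hy1, ← hcast n z]
      by_cases hy : y ∈ A'
      · simp only [Set.indicator_of_mem hy, Set.indicator_of_mem (hsub hy)]
        rw [one_mul, one_div]
      · simp [Set.indicator_of_notMem hy]
    rw [h1, integral_congr_ae (Filter.Eventually.of_forall h2),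
      integral_prod_mul (f := fun y => A'.indicator (fun _ => (1 : ℝ)) y)
        (g := fun z : Fin n → Λ => (1 + ((∑ k, B.indicator (fun _ => (1 : ℕ)) (z k) : ℕ) : ℝ))⁻¹),
      integral_indicator_const (1 : ℝ) hA',
      aux_binom_integral μ B hB n (fun t => (1 + (t : ℝ))⁻¹), aux_binom_inv p hp n]
    simp
    exact Or.inl rfl
  rw [Finset.sum_congr rfl fun j _ => hj j, Finset.sum_const, Finset.card_univ, Fintype.card_fin,
    nsmul_eq_mul]
  have hn1 : ((n : ℝ) + 1) ≠ 0 := by positivity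
  push_cast
  field_simp

lemma aux_map_pi {Ω Λ : Type*} [MeasurableSpace Ω] [MeasurableSpace Λ] {n : ℕ}
    (P : Measure Ω) [IsProbabilityMeasure P] (μ : Measure Λ) [IsProbabilityMeasure μ]
    (X : Fin n → Ω → Λ) (hX : ∀ j, Measurable (X j))
    (hind : iIndepFun X P)
    (hlaw : ∀ j, Measure.map (X j) P = μ) :
    Measure.map (fun ω (j : Fin n) => X j ω) P = Measure.pi (fun _ => μ) := by
  symm
  apply Measure.pi_eq
  intro s hs
  rw [Measure.map_apply (measurable_pi_iff.2 hX) (MeasurableSet.univ_pi hs)]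
  have hpre : (fun ω (j : Fin n) => X j ω) ⁻¹' Set.univ.pi s = ⋂ j ∈ Finset.univ, X j ⁻¹' s j := by
    ext ω; simp [Set.mem_pi]
  rw [hpre, hind.measure_inter_preimage_eq_mul Finset.univ (fun i _ => hs i)]
  exact Finset.prod_congr rfl fun j _ => by
    rw [← hlaw j, Measure.map_apply (hX j) (hs j)]


end AuxESIP

theorem stmt_16 {Ω Λ D : Type*} [MeasurableSpace Ω] [MeasurableSpace Λ] [MeasurableSpace D]
    (P : Measure Ω) [IsProbabilityMeasure P]
    (Pp : Measure Λ) [IsProbabilityMeasure Pp]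
    (PD : Measure D) [IsProbabilityMeasure PD]
    (Q : Λ → D) (hQ : Measurable Q)
    (A : Set Λ) (hA : MeasurableSet A)
    (M N K : ℕ) (hN : 0 < N) (hK : 0 < K)
    (I : Fin M → Set D) (hImeas : ∀ i, MeasurableSet (I i))
    (hIdisj : Pairwise (Function.onFun Disjoint I))
    (hIcover : (⋃ i, I i) = Set.univ)
    (X : Fin N → Ω → Λ) (hXmeas : ∀ j, Measurable (X j))
    (Y : Fin K → Ω → D) (hYmeas : ∀ k, Measurable (Y k))
    (hXindep : iIndepFun X P)
    (hYindep : iIndepFun Y P)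
    (hXlaw : ∀ j, Measure.map (X j) P = Pp)
    (hYlaw : ∀ k, Measure.map (Y k) P = PD)
    (hXY : IndepFun (fun ω (j : Fin N) => X j ω) (fun ω (k : Fin K) => Y k ω) P)
    (p pb : Fin M → ℝ)
    (hp : ∀ i, p i = (Pp (Q ⁻¹' I i)).toReal)
    (hpb : ∀ i, pb i = (Pp (A ∩ Q ⁻¹' I i)).toReal)
    (hppos : ∀ i, 0 < p i) :
    ∫ ω, ∑ i : Fin M,
        ((∑ j, Set.indicator (A ∩ Q ⁻¹' I i) (fun _ => (1 : ℝ)) (X j ω)) /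
          (∑ j, Set.indicator (Q ⁻¹' I i) (fun _ => (1 : ℝ)) (X j ω))) *
        ((1 / (K : ℝ)) * ∑ k, Set.indicator (I i) (fun _ => (1 : ℝ)) (Y k ω)) ∂P
      = ∑ i : Fin M, (pb i / p i) * (1 - (1 - p i) ^ N) * (PD (I i)).toReal := by
  obtain ⟨n, rfl⟩ : ∃ n, N = n + 1 := ⟨N - 1, (Nat.succ_pred_eq_of_pos hN).symm⟩
  set Xv : Ω → (Fin (n + 1) → Λ) := fun ω j => X j ω with hXv
  set Yv : Ω → (Fin K → D) := fun ω k => Y k ω with hYv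
  have hXvm : Measurable Xv := measurable_pi_iff.2 hXmeas
  have hYvm : Measurable Yv := measurable_pi_iff.2 hYmeas
  have hmapX : Measure.map Xv P = Measure.pi fun _ => Pp :=
    aux_map_pi P Pp X hXmeas hXindep hXlaw
  set φ : Fin M → (Fin (n + 1) → Λ) → ℝ := fun i v =>
    (∑ j, (A ∩ Q ⁻¹' I i).indicator (fun _ => (1 : ℝ)) (v j)) /
      (∑ j, (Q ⁻¹' I i).indicator (fun _ => (1 : ℝ)) (v j)) with hφ
  set ψ : Fin M → (Fin K → D) → ℝ := fun i w =>
    (1 / (K : ℝ)) * ∑ k, (I i).indicator (fun _ => (1 : ℝ)) (w k) with hψ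
  have hφm : ∀ i, Measurable (φ i) := fun i =>
    (Finset.measurable_sum _ fun j _ =>
      (measurable_const.indicator (hA.inter (hQ (hImeas i)))).comp (measurable_pi_apply j)).div
      (Finset.measurable_sum _ fun j _ =>
        (measurable_const.indicator (hQ (hImeas i))).comp (measurable_pi_apply j))
  have hψm : ∀ i, Measurable (ψ i) := fun i =>
    (Finset.measurable_sum _ fun k _ =>
      (measurable_const.indicator (hImeas i)).comp (measurable_pi_apply k)).const_mul _
  have hφb : ∀ i v, |φ i v| ≤ 1 := by
    intro i v
    refine aux_abs_div_le_one _ _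
      (Finset.sum_nonneg fun j _ => Set.indicator_nonneg (fun _ _ => zero_le_one) _)
      (Finset.sum_le_sum fun j _ => ?_)
    exact Set.indicator_le_indicator_of_subset Set.inter_subset_right (fun _ => zero_le_one) _
  have hψb : ∀ i w, |ψ i w| ≤ 1 := by
    intro i w
    have h0 : (0 : ℝ) ≤ ∑ k, (I i).indicator (fun _ => (1 : ℝ)) (w k) :=
      Finset.sum_nonneg fun k _ => Set.indicator_nonneg (fun _ _ => zero_le_one) _
    have h1 : (∑ k, (I i).indicator (fun _ => (1 : ℝ)) (w k)) ≤ K := by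
      calc (∑ k, (I i).indicator (fun _ => (1 : ℝ)) (w k)) ≤ ∑ _k : Fin K, (1 : ℝ) :=
            Finset.sum_le_sum fun k _ => Set.indicator_le_self' (fun _ _ => zero_le_one) _
        _ = K := by simp
    have hK0 : (0 : ℝ) < K := by exact_mod_cast hK
    rw [hψ, abs_of_nonneg (by positivity)]
    calc (1 / (K : ℝ)) * ∑ k, (I i).indicator (fun _ => (1 : ℝ)) (w k)
        ≤ (1 / (K : ℝ)) * K := mul_le_mul_of_nonneg_left h1 (by positivity)
      _ = 1 := by field_simp
  have key : ∀ i : Fin M, ∫ ω, φ i (Xv ω) * ψ i (Yv ω) ∂P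
      = (pb i / p i) * (1 - (1 - p i) ^ (n + 1)) * (PD (I i)).toReal := by
    intro i
    have hiind : IndepFun (fun ω => φ i (Xv ω)) (fun ω => ψ i (Yv ω)) P :=
      hXY.comp (hφm i) (hψm i)
    have hmul := hiind.integral_mul_eq_mul_integral (((hφm i).comp hXvm).aestronglyMeasurable)
      (((hψm i).comp hYvm).aestronglyMeasurable)
    have hfe : (fun ω => φ i (Xv ω) * ψ i (Yv ω))
        = (fun ω => φ i (Xv ω)) * (fun ω => ψ i (Yv ω)) := rfl
    rw [hfe, hmul]
    have hX1 : ∫ ω, φ i (Xv ω) ∂P = (pb i / p i) * (1 - (1 - p i) ^ (n + 1)) := by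
      rw [← integral_map hXvm.aemeasurable (hφm i).aestronglyMeasurable, hmapX]
      rw [hφ]
      have := aux_ratio_integral Pp (A ∩ Q ⁻¹' I i) (Q ⁻¹' I i)
        (hA.inter (hQ (hImeas i))) (hQ (hImeas i)) Set.inter_subset_right
        (by rw [← hp i]; exact (hppos i).ne') n
      rw [this, ← hp i, ← hpb i]
    have hY1 : ∫ ω, ψ i (Yv ω) ∂P = (PD (I i)).toReal := by
      have hint : ∀ k : Fin K, Integrable (fun ω => (I i).indicator (fun _ => (1 : ℝ)) (Yv ω k)) P := by
        intro k
        refine Integrable.mono' (integrable_const 1)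
          ((measurable_const.indicator (hImeas i)).comp
            ((measurable_pi_apply k).comp hYvm) |>.aestronglyMeasurable)
          (Filter.Eventually.of_forall fun ω => ?_)
        by_cases h : Yv ω k ∈ I i <;> simp [h]
      simp only [hψ]
      rw [integral_const_mul, integral_finset_sum _ fun k _ => hint k]
      have hone : ∀ k : Fin K, ∫ ω, (I i).indicator (fun _ => (1 : ℝ)) (Yv ω k) ∂P
          = (PD (I i)).toReal := by
        intro k
        have : (fun ω => (I i).indicator (fun _ => (1 : ℝ)) (Yv ω k))
            = fun ω => (I i).indicator (fun _ => (1 : ℝ)) (Y k ω) := rfl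
        rw [this, ← integral_map (hYmeas k).aemeasurable
          (measurable_const.indicator (hImeas i)).aestronglyMeasurable, hYlaw k,
          integral_indicator_const (1 : ℝ) (hImeas i)]
        simp
        rfl
      rw [Finset.sum_congr rfl fun k _ => hone k, Finset.sum_const, Finset.card_univ,
        Fintype.card_fin, nsmul_eq_mul]
      have hK0 : (K : ℝ) ≠ 0 := by positivity
      field_simp
    rw [hX1, hY1]
  have hint : ∀ i : Fin M, Integrable (fun ω => φ i (Xv ω) * ψ i (Yv ω)) P := by
    intro i
    refine Integrable.mono' (integrable_const 1)
      ((((hφm i).comp hXvm).mul ((hψm i).comp hYvm)).aestronglyMeasurable)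
      (Filter.Eventually.of_forall fun ω => ?_)
    rw [norm_mul]
    exact mul_le_one₀ (hφb i (Xv ω)) (abs_nonneg _) (hψb i (Yv ω))
  calc ∫ ω, ∑ i : Fin M,
        ((∑ j, Set.indicator (A ∩ Q ⁻¹' I i) (fun _ => (1 : ℝ)) (X j ω)) /
          (∑ j, Set.indicator (Q ⁻¹' I i) (fun _ => (1 : ℝ)) (X j ω))) *
        ((1 / (K : ℝ)) * ∑ k, Set.indicator (I i) (fun _ => (1 : ℝ)) (Y k ω)) ∂P
      = ∫ ω, ∑ i : Fin M, φ i (Xv ω) * ψ i (Yv ω) ∂P := rfl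
    _ = ∑ i : Fin M, ∫ ω, φ i (Xv ω) * ψ i (Yv ω) ∂P :=
        integral_finset_sum _ fun i _ => hint i
    _ = ∑ i : Fin M, (pb i / p i) * (1 - (1 - p i) ^ (n + 1)) * (PD (I i)).toReal :=
        Finset.sum_congr rfl fun i _ => key i
end
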